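/- arXiv:2605.10506 — 3 statements merged into one kernel-verified Lean document; each statement's English description precedes it below -/
import Mathlib

section
/- For every s with 1/2 < s < 1 there exists a constant C > 0 such that for every Schwartz function f : ℝ³ → ℝ, ‖‖f‖_{L^∞_{x₃}}‖_{L^{2/s}_{x_h}}^{2/s} ≤ C · ‖∂₃f‖_{L²}^{1/s} · ‖‖f‖_{L²_{x₃}}‖_{L^{2/(2s-1)}_{x_h}}^{1/s}. (Intermediate estimate (A.1) in the proof of the appendix lemma.) -/
open MeasureTheory SchwartzMap
open scoped ENNReal
open Filter Topology

noncomputable section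

/-- Partial derivative of a Schwartz function on `ℝ³` in the `i`-th coordinate direction. -/
def pd3 (i : Fin 3) (f : SchwartzMap (EuclideanSpace ℝ (Fin 3)) ℝ) :
    SchwartzMap (EuclideanSpace ℝ (Fin 3)) ℝ :=
  LineDeriv.lineDerivOpCLM ℝ (SchwartzMap (EuclideanSpace ℝ (Fin 3)) ℝ)
    (EuclideanSpace.single i (1 : ℝ)) f

/-- The `L²` norm (w.r.t. Lebesgue measure on `ℝ³`). -/
def L2 (f : SchwartzMap (EuclideanSpace ℝ (Fin 3)) ℝ) : ℝ :=
  (eLpNorm f 2 volume).toReal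

/-- The point of `ℝ³` with horizontal part `xh ∈ ℝ²` and vertical coordinate `x3 ∈ ℝ`. -/
def emb (xh : EuclideanSpace ℝ (Fin 2)) (x3 : ℝ) : EuclideanSpace ℝ (Fin 3) :=
  (WithLp.equiv 2 (Fin 3 → ℝ)).symm ![xh 0, xh 1, x3]

/-- The mixed norm `‖ ‖f‖_{L^r_{x₃}} ‖_{L^ρ_{x_h}}`: the `L^ρ(ℝ²)` norm (in the horizontal
variable) of the function `x_h ↦ ‖f(x_h, ·)‖_{L^r(ℝ)}`. -/
def mixedNorm (f : EuclideanSpace ℝ (Fin 3) → ℝ) (r ρ : ℝ≥0∞) : ℝ :=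
  (eLpNorm (fun xh : EuclideanSpace ℝ (Fin 2) =>
    (eLpNorm (fun x3 : ℝ => f (emb xh x3)) r volume).toReal) ρ volume).toReal

/-! ### Auxiliary lemmas -/

lemma emb_apply (xh : EuclideanSpace ℝ (Fin 2)) (t : ℝ) (i : Fin 3) :
    emb xh t i = ![xh 0, xh 1, t] i := rfl

lemma emb_eq (xh : EuclideanSpace ℝ (Fin 2)) (t : ℝ) :
    emb xh t = emb xh 0 + t • (EuclideanSpace.single (2 : Fin 3) (1:ℝ)) := by
  ext i
  have h1 : (emb xh 0 + t • (EuclideanSpace.single (2 : Fin 3) (1:ℝ))) i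
      = emb xh 0 i + t * (EuclideanSpace.single (2 : Fin 3) (1:ℝ)) i := rfl
  rw [h1]
  fin_cases i <;> simp [emb_apply, EuclideanSpace.single_apply]

lemma norm_emb_sq (xh : EuclideanSpace ℝ (Fin 2)) (t : ℝ) :
    ‖emb xh t‖^2 = ‖xh‖^2 + t^2 := by
  rw [EuclideanSpace.norm_eq, EuclideanSpace.norm_eq]
  rw [Real.sq_sqrt (by positivity), Real.sq_sqrt (by positivity)]
  simp [emb_apply, Fin.sum_univ_three, Fin.sum_univ_two, sq_abs]

lemma continuous_emb : Continuous fun p : (EuclideanSpace ℝ (Fin 2)) × ℝ => emb p.1 p.2 := by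
  have : (fun p : (EuclideanSpace ℝ (Fin 2)) × ℝ => emb p.1 p.2)
      = (PiLp.continuousLinearEquiv 2 ℝ (fun _ : Fin 3 => ℝ)).symm ∘
        (fun p : (EuclideanSpace ℝ (Fin 2)) × ℝ => ![p.1 0, p.1 1, p.2]) := rfl
  rw [this]
  apply ((PiLp.continuousLinearEquiv 2 ℝ (fun _ : Fin 3 => ℝ)).symm).continuous.comp
  apply continuous_pi
  intro i
  fin_cases i
  · exact ((EuclideanSpace.proj (0 : Fin 2)).continuous).comp continuous_fst
  · exact ((EuclideanSpace.proj (1 : Fin 2)).continuous).comp continuous_fst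
  · exact continuous_snd

/-! ### Vertical slices of Schwartz functions -/

lemma hasDerivAt_emb (xh : EuclideanSpace ℝ (Fin 2)) (t : ℝ) :
    HasDerivAt (fun u => emb xh u) (EuclideanSpace.single (2 : Fin 3) (1:ℝ)) t := by
  have : (fun u => emb xh u)
      = fun u => emb xh 0 + u • (EuclideanSpace.single (2 : Fin 3) (1:ℝ)) := by
    funext u; exact emb_eq xh u
  rw [this]
  simpa using ((hasDerivAt_id t).smul_const
    (EuclideanSpace.single (2 : Fin 3) (1:ℝ))).const_add (emb xh 0)

lemma antilipschitz_emb (xh : EuclideanSpace ℝ (Fin 2)) :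
    AntilipschitzWith 1 (fun t => emb xh t) := by
  apply AntilipschitzWith.of_le_mul_dist
  intro t u
  rw [dist_eq_norm, dist_eq_norm]
  have h : emb xh t - emb xh u = (t - u) • (EuclideanSpace.single (2 : Fin 3) (1:ℝ)) := by
    rw [emb_eq xh t, emb_eq xh u]; module
  rw [h, norm_smul]
  simp [EuclideanSpace.norm_single]

lemma temperate_emb (xh : EuclideanSpace ℝ (Fin 2)) :
    Function.HasTemperateGrowth (fun t => emb xh t) := by
  apply Function.HasTemperateGrowth.of_fderiv (k := 1) (C := ‖xh‖ + 1)
  · have : (fderiv ℝ fun u => emb xh u) = fun _ =>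
        ContinuousLinearMap.smulRight (1 : ℝ →L[ℝ] ℝ)
          (EuclideanSpace.single (2 : Fin 3) (1:ℝ)) := by
      funext t
      exact (hasDerivAt_emb xh t).hasFDerivAt.fderiv
    rw [this]
    exact Function.HasTemperateGrowth.const _
  · exact fun t => (hasDerivAt_emb xh t).differentiableAt
  · intro t
    have h := norm_emb_sq xh t
    have h1 : (0:ℝ) ≤ ‖xh‖ := norm_nonneg _
    have h2 : (0:ℝ) ≤ ‖emb xh t‖ := norm_nonneg _
    have hsq : ‖emb xh t‖^2 ≤ ((‖xh‖+1)*(1+‖t‖))^2 := by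
      rw [h, Real.norm_eq_abs]
      nlinarith [sq_abs t, abs_nonneg t]
    calc ‖emb xh t‖ = Real.sqrt (‖emb xh t‖^2) := (Real.sqrt_sq h2).symm
      _ ≤ Real.sqrt (((‖xh‖+1)*(1+‖t‖))^2) := Real.sqrt_le_sqrt hsq
      _ = (‖xh‖+1)*(1+‖t‖)^1 := by
          rw [Real.sqrt_sq (by positivity), pow_one]

/-- The vertical slice of a Schwartz function, as a Schwartz function on `ℝ`. -/
def slce (f : SchwartzMap (EuclideanSpace ℝ (Fin 3)) ℝ) (xh : EuclideanSpace ℝ (Fin 2)) :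
    SchwartzMap ℝ ℝ :=
  SchwartzMap.compCLMOfAntilipschitz ℝ (temperate_emb xh) (antilipschitz_emb xh) f

lemma slce_coe (f : SchwartzMap (EuclideanSpace ℝ (Fin 3)) ℝ) (xh : EuclideanSpace ℝ (Fin 2)) :
    ⇑(slce f xh) = fun t => f (emb xh t) := rfl

lemma hasDerivAt_slice (xh : EuclideanSpace ℝ (Fin 2))
    (f : SchwartzMap (EuclideanSpace ℝ (Fin 3)) ℝ) (t : ℝ) :
    HasDerivAt (fun u => f (emb xh u)) (pd3 2 f (emb xh t)) t := by
  have hf : HasFDerivAt f (fderiv ℝ f (emb xh t)) (emb xh t) :=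
    (f.differentiableAt).hasFDerivAt
  have := hf.comp_hasDerivAt t (hasDerivAt_emb xh t)
  simp only [pd3, LineDeriv.lineDerivOpCLM_apply, SchwartzMap.lineDerivOp_apply_eq_fderiv]
  exact this

/-! ### Fubini for the splitting `ℝ³ = ℝ² × ℝ` -/

lemma key_pt (xh : EuclideanSpace ℝ (Fin 2)) (t : ℝ) :
    (MeasurableEquiv.toLp 2 (Fin 3 → ℝ)).symm.symm
      ((MeasurableEquiv.piFinSuccAbove (fun _ : Fin 3 => ℝ) 2).symm
        (t, (MeasurableEquiv.toLp 2 (Fin 2 → ℝ)).symm xh)) = emb xh t := by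
  ext i
  fin_cases i <;>
    simp [MeasurableEquiv.piFinSuccAbove_symm_apply, MeasurableEquiv.coe_toLp,
      MeasurableEquiv.coe_toLp_symm, emb,
      Fin.insertNth, Fin.succAbove, Fin.succAboveCases, Fin.lt_def, Fin.castPred,
      Fin.castLT]

lemma lintegral_emb (F : EuclideanSpace ℝ (Fin 3) → ℝ≥0∞) (hF : Measurable F) :
    ∫⁻ x, F x = ∫⁻ xh : EuclideanSpace ℝ (Fin 2), ∫⁻ t : ℝ, F (emb xh t) := by
  have e3mp := (EuclideanSpace.volume_preserving_symm_measurableEquiv_toLp (Fin 3)).symm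
  have πmp := (MeasureTheory.volume_preserving_piFinSuccAbove (fun _ : Fin 3 => ℝ) 2).symm
  have e2mp := EuclideanSpace.volume_preserving_symm_measurableEquiv_toLp (Fin 2)
  set Φ : ℝ × (Fin 2 → ℝ) → EuclideanSpace ℝ (Fin 3) := fun p =>
    (MeasurableEquiv.toLp 2 (Fin 3 → ℝ)).symm.symm
      ((MeasurableEquiv.piFinSuccAbove (fun _ : Fin 3 => ℝ) 2).symm p) with hΦdef
  have hΦ : MeasurePreserving Φ volume volume := e3mp.comp πmp
  have hΦemb : MeasurableEmbedding Φ :=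
    ((MeasurableEquiv.toLp 2 (Fin 3 → ℝ)).symm.symm.measurableEmbedding).comp
      (MeasurableEquiv.piFinSuccAbove (fun _ : Fin 3 => ℝ) 2).symm.measurableEmbedding
  calc ∫⁻ x, F x = ∫⁻ p : ℝ × (Fin 2 → ℝ), F (Φ p) := (hΦ.lintegral_comp_emb hΦemb F).symm
    _ = ∫⁻ y : Fin 2 → ℝ, ∫⁻ t : ℝ, F (Φ (t, y)) := by
        exact MeasureTheory.lintegral_prod_symm _ ((hF.comp hΦemb.measurable).aemeasurable)
    _ = ∫⁻ xh : EuclideanSpace ℝ (Fin 2), ∫⁻ t : ℝ,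
          F (Φ (t, (MeasurableEquiv.toLp 2 (Fin 2 → ℝ)).symm xh)) :=
        (e2mp.lintegral_comp_emb
          (MeasurableEquiv.toLp 2 (Fin 2 → ℝ)).symm.measurableEmbedding _).symm
    _ = ∫⁻ xh : EuclideanSpace ℝ (Fin 2), ∫⁻ t : ℝ, F (emb xh t) := by
        congr 1; funext xh; congr 1; funext t; exact congrArg F (key_pt xh t)

/-! ### `L²` facts for Schwartz functions, and the 1D Agmon inequality -/

lemma schwartz_bdd {D : Type*} [NormedAddCommGroup D] [NormedSpace ℝ D]
    (g : SchwartzMap D ℝ) : ∃ C, ∀ x, ‖g x‖ ≤ C := by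
  refine ⟨SchwartzMap.seminorm ℝ 0 0 g, fun x => ?_⟩
  have := g.le_seminorm ℝ 0 0 x
  simpa [norm_iteratedFDeriv_zero] using this

lemma schwartz_memL2' {D : Type*} [NormedAddCommGroup D] [NormedSpace ℝ D]
    [MeasurableSpace D] [BorelSpace D] [SecondCountableTopology D]
    (μ : Measure D) [μ.HasTemperateGrowth]
    (g : SchwartzMap D ℝ) : MemLp (g : D → ℝ) 2 μ := by
  refine (memLp_two_iff_integrable_sq g.continuous.aestronglyMeasurable).2 ?_
  simp_rw [sq]
  exact g.integrable.bdd_mul g.continuous.aestronglyMeasurable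
    (Eventually.of_forall (schwartz_bdd g).choose_spec)

lemma agmon (g g' : SchwartzMap ℝ ℝ) (hderiv : ∀ t, HasDerivAt g (g' t) t) :
    eLpNorm (g : ℝ → ℝ) ⊤ volume ^ (2:ℝ) ≤
      2 * eLpNorm (g : ℝ → ℝ) 2 volume * eLpNorm (g' : ℝ → ℝ) 2 volume := by
  have hgg' : Integrable (fun u => g u * g' u) volume :=
    g'.integrable.bdd_mul g.continuous.aestronglyMeasurable
      (Eventually.of_forall (schwartz_bdd g).choose_spec)
  have habs : Integrable (fun u => |g u| * |g' u|) volume := by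
    have := hgg'.abs
    simpa [abs_mul] using this
  set K : ℝ := 2 * ∫ u, |g u| * |g' u| with hK
  have hKnn : 0 ≤ K :=
    mul_nonneg (by norm_num)
      (integral_nonneg fun u => mul_nonneg (abs_nonneg _) (abs_nonneg _))
  have hpt : ∀ t, g t ^ 2 ≤ K := by
    intro t
    have hderiv2 : ∀ u ∈ Set.Iic t, HasDerivAt (fun u => g u ^ 2) (2 * g u * g' u) u := by
      intro u _
      have h : HasDerivAt (fun u => g u ^ 2) _ u := (hderiv u).fun_pow 2
      convert h using 1
      push_cast
      ring
    have hint : IntegrableOn (fun u => 2 * g u * g' u) (Set.Iic t) volume := by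
      have h2 : Integrable (fun u => 2 * (g u * g' u)) volume := hgg'.const_mul 2
      exact (h2.congr (Eventually.of_forall fun u => by ring)).integrableOn
    have htend : Tendsto (fun u => g u ^ 2) atBot (𝓝 (0:ℝ)) := by
      have h0 : Tendsto (g : ℝ → ℝ) atBot (𝓝 0) :=
        (zero_at_infty g).mono_left atBot_le_cocompact
      have h1 := h0.mul h0
      rw [mul_zero] at h1
      exact h1.congr fun u => (sq (g u)).symm ▸ (by ring)
    have hftc := integral_Iic_of_hasDerivAt_of_tendsto' hderiv2 hint htend
    have hle1 : ∫ u in Set.Iic t, 2 * g u * g' u ≤ ∫ u in Set.Iic t, 2 * (|g u| * |g' u|) := by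
      apply setIntegral_mono_on hint (habs.const_mul 2).integrableOn measurableSet_Iic
      intro u _
      calc 2 * g u * g' u = 2 * (g u * g' u) := by ring
        _ ≤ 2 * |g u * g' u| := by
            exact mul_le_mul_of_nonneg_left (le_abs_self _) (by norm_num)
        _ = 2 * (|g u| * |g' u|) := by rw [abs_mul]
    have hle2 : ∫ u in Set.Iic t, 2 * (|g u| * |g' u|) ≤ ∫ u, 2 * (|g u| * |g' u|) := by
      apply setIntegral_le_integral (habs.const_mul 2)
      exact Eventually.of_forall fun u =>
        mul_nonneg (by norm_num) (mul_nonneg (abs_nonneg _) (abs_nonneg _))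
    have : g t ^ 2 - 0 ≤ K := by
      rw [← hftc]
      calc _ ≤ ∫ u in Set.Iic t, 2 * (|g u| * |g' u|) := hle1
        _ ≤ ∫ u, 2 * (|g u| * |g' u|) := hle2
        _ = K := by rw [hK, integral_const_mul]
    linarith
  have hsup : eLpNorm (g : ℝ → ℝ) ⊤ volume ≤ ENNReal.ofReal (Real.sqrt K) := by
    rw [eLpNorm_exponent_top]
    apply eLpNormEssSup_le_of_ae_bound (C := Real.sqrt K)
    apply Eventually.of_forall
    intro t
    rw [Real.norm_eq_abs, ← Real.sqrt_sq_eq_abs]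
    exact Real.sqrt_le_sqrt (hpt t)
  calc eLpNorm (g : ℝ → ℝ) ⊤ volume ^ (2:ℝ)
      ≤ ENNReal.ofReal (Real.sqrt K) ^ (2:ℝ) :=
        ENNReal.rpow_le_rpow hsup (by norm_num)
    _ = ENNReal.ofReal K := by
        rw [ENNReal.ofReal_rpow_of_nonneg (Real.sqrt_nonneg _) (by norm_num)]
        congr 1
        rw [Real.rpow_two, Real.sq_sqrt hKnn]
    _ ≤ 2 * eLpNorm (g : ℝ → ℝ) 2 volume * eLpNorm (g' : ℝ → ℝ) 2 volume := by
        have hconj : Real.HolderConjugate 2 2 :=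
            (Real.holderConjugate_iff_eq_conjExponent (by norm_num)).2 (by norm_num)
        have hgm : AEMeasurable (fun u => (‖g u‖₊ : ℝ≥0∞)) volume :=
          (g.continuous.measurable.enorm).aemeasurable
        have hg'm : AEMeasurable (fun u => (‖g' u‖₊ : ℝ≥0∞)) volume :=
          (g'.continuous.measurable.enorm).aemeasurable
        have hHolder := ENNReal.lintegral_mul_le_Lp_mul_Lq volume hconj hgm hg'm
        have he : ∀ h : SchwartzMap ℝ ℝ, eLpNorm (h : ℝ → ℝ) 2 volume
            = (∫⁻ u, (‖h u‖₊ : ℝ≥0∞) ^ (2:ℝ)) ^ (1/(2:ℝ)) := by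
          intro h
          rw [eLpNorm_eq_lintegral_rpow_enorm_toReal two_ne_zero ENNReal.ofNat_ne_top]
          simp only [enorm_eq_nnnorm]
          norm_num
        have hofK : ENNReal.ofReal K
            = 2 * ENNReal.ofReal (∫ u, |g u| * |g' u|) := by
          rw [hK, ENNReal.ofReal_mul (by norm_num)]
          norm_num
        rw [hofK, he, he]
        rw [ofReal_integral_eq_lintegral_ofReal habs (Eventually.of_forall fun u =>
          mul_nonneg (abs_nonneg _) (abs_nonneg _))]
        have hpw : (fun u => ENNReal.ofReal (|g u| * |g' u|))
            = fun u => (‖g u‖₊ : ℝ≥0∞) * (‖g' u‖₊ : ℝ≥0∞) := by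
          funext u
          rw [ENNReal.ofReal_mul (abs_nonneg _), ← enorm_eq_nnnorm, ← enorm_eq_nnnorm,
            Real.enorm_eq_ofReal_abs,
            Real.enorm_eq_ofReal_abs]
        rw [hpw]
        rw [mul_assoc]
        exact mul_le_mul_right (by simpa using hHolder) 2

/-! ### The horizontal profile of the vertical `L²` norm -/

def Bfun (f : SchwartzMap (EuclideanSpace ℝ (Fin 3)) ℝ) (xh : EuclideanSpace ℝ (Fin 2)) :
    ℝ≥0∞ := eLpNorm (fun t => f (emb xh t)) 2 volume

lemma Bfun_eq (f : SchwartzMap (EuclideanSpace ℝ (Fin 3)) ℝ) (xh : EuclideanSpace ℝ (Fin 2)) :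
    Bfun f xh = (∫⁻ t, (‖f (emb xh t)‖₊ : ℝ≥0∞) ^ (2:ℝ)) ^ (1/2:ℝ) := by
  rw [Bfun, eLpNorm_eq_lintegral_rpow_enorm_toReal two_ne_zero ENNReal.ofNat_ne_top]
  simp only [enorm_eq_nnnorm]
  norm_num

lemma measurable_Bfun (f : SchwartzMap (EuclideanSpace ℝ (Fin 3)) ℝ) :
    Measurable (Bfun f) := by
  have hrw : Bfun f = fun xh => (∫⁻ t, (‖f (emb xh t)‖₊ : ℝ≥0∞) ^ (2:ℝ)) ^ (1/2:ℝ) :=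
    funext (Bfun_eq f)
  rw [hrw]
  apply (ENNReal.continuous_rpow_const.measurable).comp
  apply Measurable.lintegral_prod_right
  exact ENNReal.continuous_rpow_const.measurable.comp
    ((f.continuous.comp continuous_emb).measurable.enorm)

lemma Bfun_ne_top (f : SchwartzMap (EuclideanSpace ℝ (Fin 3)) ℝ)
    (xh : EuclideanSpace ℝ (Fin 2)) : Bfun f xh ≠ ∞ :=
  (schwartz_memL2' volume (slce f xh)).eLpNorm_lt_top.ne

lemma lintegral_Bfun_sq (f : SchwartzMap (EuclideanSpace ℝ (Fin 3)) ℝ) :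
    ∫⁻ xh, (Bfun f xh) ^ (2:ℝ)
      = (eLpNorm (f : EuclideanSpace ℝ (Fin 3) → ℝ) 2 volume) ^ (2:ℝ) := by
  have hmeas : Measurable fun x : EuclideanSpace ℝ (Fin 3) => (‖f x‖₊ : ℝ≥0∞) ^ (2:ℝ) :=
    ENNReal.continuous_rpow_const.measurable.comp f.continuous.measurable.enorm
  have h1 : ∀ xh, (Bfun f xh) ^ (2:ℝ) = ∫⁻ t, (‖f (emb xh t)‖₊ : ℝ≥0∞) ^ (2:ℝ) := by
    intro xh
    rw [Bfun_eq, ← ENNReal.rpow_mul]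
    norm_num
  simp_rw [h1]
  rw [← lintegral_emb _ hmeas]
  rw [eLpNorm_eq_lintegral_rpow_enorm_toReal two_ne_zero ENNReal.ofNat_ne_top, ← ENNReal.rpow_mul]
  simp only [enorm_eq_nnnorm]
  norm_num

/-! ### Decay of the horizontal profile -/

def phi3 : ℝ → ℝ := fun t => (1 + ‖t‖) ^ (-(3:ℝ))

def cphi : ℝ≥0∞ := eLpNorm phi3 2 volume

lemma phi3_nonneg (t : ℝ) : 0 ≤ phi3 t := by
  unfold phi3; positivity

lemma cphi_ne_top : cphi ≠ ∞ := by
  have hmeas : AEStronglyMeasurable phi3 (volume : Measure ℝ) := by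
    apply Measurable.aestronglyMeasurable; unfold phi3; fun_prop
  have hint : Integrable (fun t : ℝ => phi3 t ^ 2) volume := by
    have h6 : Integrable (fun t : ℝ => (1 + ‖t‖) ^ (-(6:ℝ))) volume := by
      apply integrable_one_add_norm
      simp
    apply h6.congr
    apply Eventually.of_forall
    intro t
    show (1 + ‖t‖) ^ (-(6:ℝ)) = phi3 t ^ 2
    unfold phi3
    rw [← Real.rpow_natCast ((1 + ‖t‖) ^ (-(3:ℝ))) 2, ← Real.rpow_mul (by positivity)]
    norm_num
  exact ((memLp_two_iff_integrable_sq hmeas).2 hint).eLpNorm_lt_top.ne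

lemma one_add_mul_le (xh : EuclideanSpace ℝ (Fin 2)) (t : ℝ) :
    (1 + ‖xh‖) * (1 + ‖t‖) ≤ (1 + ‖emb xh t‖) ^ 2 := by
  have h := norm_emb_sq xh t
  have h1 : (0:ℝ) ≤ ‖xh‖ := norm_nonneg _
  have h2 : (0:ℝ) ≤ ‖emb xh t‖ := norm_nonneg _
  have h3 : (0:ℝ) ≤ ‖t‖ := norm_nonneg _
  have ht : ‖t‖^2 = t^2 := by rw [Real.norm_eq_abs, sq_abs]
  nlinarith [sq_nonneg (‖xh‖ - ‖t‖), sq_nonneg (‖xh‖ + ‖t‖ - 2 * ‖emb xh t‖),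
    sq_nonneg (‖xh‖ - ‖emb xh t‖), sq_nonneg (‖t‖ - ‖emb xh t‖)]

lemma pt_decay (f : SchwartzMap (EuclideanSpace ℝ (Fin 3)) ℝ) :
    ∃ c : ℝ, 0 ≤ c ∧ ∀ (xh : EuclideanSpace ℝ (Fin 2)) (t : ℝ),
      ‖f (emb xh t)‖ ≤ (c * (1 + ‖xh‖) ^ (-(3:ℝ))) * (1 + ‖t‖) ^ (-(3:ℝ)) := by
  set c : ℝ := 2 ^ 6 * (Finset.Iic ((6:ℕ),(0:ℕ))).sup
    (fun m => SchwartzMap.seminorm ℝ m.1 m.2) f with hc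
  have hc0 : 0 ≤ c := by positivity
  refine ⟨c, hc0, fun xh t => ?_⟩
  have hbound := SchwartzMap.one_add_le_sup_seminorm_apply (𝕜 := ℝ) (m := ((6:ℕ),(0:ℕ)))
    (k := 6) (n := 0) le_rfl le_rfl f (emb xh t)
  rw [norm_iteratedFDeriv_zero] at hbound
  have hprod : (1 + ‖xh‖) ^ (3:ℕ) * (1 + ‖t‖) ^ (3:ℕ) ≤ (1 + ‖emb xh t‖) ^ (6:ℕ) := by
    calc (1 + ‖xh‖) ^ (3:ℕ) * (1 + ‖t‖) ^ (3:ℕ)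
        = ((1 + ‖xh‖) * (1 + ‖t‖)) ^ (3:ℕ) := by ring
      _ ≤ ((1 + ‖emb xh t‖) ^ 2) ^ (3:ℕ) := by
          apply pow_le_pow_left₀ (by positivity) (one_add_mul_le xh t)
      _ = (1 + ‖emb xh t‖) ^ (6:ℕ) := by ring
  have hxh : (0:ℝ) < (1 + ‖xh‖) ^ (3:ℕ) := by positivity
  have htt : (0:ℝ) < (1 + ‖t‖) ^ (3:ℕ) := by positivity
  have key : ‖f (emb xh t)‖ * ((1 + ‖xh‖) ^ (3:ℕ) * (1 + ‖t‖) ^ (3:ℕ)) ≤ c := by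
    calc ‖f (emb xh t)‖ * ((1 + ‖xh‖) ^ (3:ℕ) * (1 + ‖t‖) ^ (3:ℕ))
        ≤ ‖f (emb xh t)‖ * (1 + ‖emb xh t‖) ^ (6:ℕ) := by
          apply mul_le_mul_of_nonneg_left hprod (norm_nonneg _)
      _ = (1 + ‖emb xh t‖) ^ (6:ℕ) * ‖f (emb xh t)‖ := mul_comm _ _
      _ ≤ c := by rw [hc]; simpa using hbound
  have hrw : (c * (1 + ‖xh‖) ^ (-(3:ℝ))) * (1 + ‖t‖) ^ (-(3:ℝ))
      = c / ((1 + ‖xh‖) ^ (3:ℕ) * (1 + ‖t‖) ^ (3:ℕ)) := by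
    rw [Real.rpow_neg (by positivity), Real.rpow_neg (by positivity)]
    rw [show ((3:ℝ)) = ((3:ℕ):ℝ) by norm_num, Real.rpow_natCast, Real.rpow_natCast]
    field_simp
  rw [hrw, le_div_iff₀ (by positivity)]
  exact key

lemma Bfun_le (f : SchwartzMap (EuclideanSpace ℝ (Fin 3)) ℝ) :
    ∃ c : ℝ, 0 ≤ c ∧ ∀ xh : EuclideanSpace ℝ (Fin 2),
      Bfun f xh ≤ ENNReal.ofReal (c * (1 + ‖xh‖) ^ (-(3:ℝ))) * cphi := by
  obtain ⟨c, hc0, hdec⟩ := pt_decay f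
  refine ⟨c, hc0, fun xh => ?_⟩
  have hmono : Bfun f xh ≤ eLpNorm ((c * (1 + ‖xh‖) ^ (-(3:ℝ))) • phi3) 2 volume := by
    apply eLpNorm_mono
    intro t
    rw [Pi.smul_apply, smul_eq_mul]
    have h1 := hdec xh t
    rw [Real.norm_eq_abs (((c * (1 + ‖xh‖) ^ (-(3:ℝ)))) * phi3 t), abs_of_nonneg (by
      have := phi3_nonneg t
      positivity)]
    exact h1
  rw [eLpNorm_const_smul] at hmono
  refine hmono.trans (le_of_eq ?_)
  congr 1
  rw [Real.enorm_eq_ofReal_abs, abs_of_nonneg (by positivity)]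

lemma lintegral_Bfun_rpow_lt_top (f : SchwartzMap (EuclideanSpace ℝ (Fin 3)) ℝ)
    {q : ℝ} (hq : 1 ≤ q) : ∫⁻ xh, (Bfun f xh) ^ q < ∞ := by
  obtain ⟨c, hc0, hle⟩ := Bfun_le f
  have hq0 : 0 ≤ q := by linarith
  calc ∫⁻ xh, (Bfun f xh) ^ q
      ≤ ∫⁻ xh, (ENNReal.ofReal (c * (1 + ‖xh‖) ^ (-(3:ℝ))) * cphi) ^ q := by
        apply lintegral_mono
        intro xh
        exact ENNReal.rpow_le_rpow (hle xh) hq0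
    _ = ∫⁻ xh, ENNReal.ofReal ((c^q * (1 + ‖xh‖) ^ (-(3*q))) ) * cphi ^ q := by
        congr 1
        funext xh
        rw [ENNReal.mul_rpow_of_nonneg _ _ hq0,
          ENNReal.ofReal_rpow_of_nonneg (by positivity) hq0]
        congr 2
        rw [Real.mul_rpow (by positivity) (by positivity),
          ← Real.rpow_mul (by positivity)]
        ring_nf
    _ = (∫⁻ xh : EuclideanSpace ℝ (Fin 2),
          ENNReal.ofReal (c^q * (1 + ‖xh‖) ^ (-(3*q)))) * cphi ^ q := by
        rw [lintegral_mul_const']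
        exact (ENNReal.rpow_ne_top_of_nonneg hq0 cphi_ne_top)
    _ < ∞ := by
        apply ENNReal.mul_lt_top _ (ENNReal.rpow_lt_top_of_nonneg hq0 cphi_ne_top)
        have : ∀ xh : EuclideanSpace ℝ (Fin 2),
            ENNReal.ofReal (c^q * (1 + ‖xh‖) ^ (-(3*q)))
            = ENNReal.ofReal (c^q) * ENNReal.ofReal ((1 + ‖xh‖) ^ (-(3*q))) := by
          intro xh
          rw [ENNReal.ofReal_mul (by positivity)]
        simp_rw [this]
        rw [lintegral_const_mul' _ _ ENNReal.ofReal_ne_top]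
        apply ENNReal.mul_lt_top ENNReal.ofReal_lt_top
        apply finite_integral_one_add_norm
        simp only [finrank_euclideanSpace, Fintype.card_fin]
        push_cast
        linarith

/-! ### Agmon's inequality on slices -/

lemma agmon_cor (f : SchwartzMap (EuclideanSpace ℝ (Fin 3)) ℝ)
    (xh : EuclideanSpace ℝ (Fin 2)) :
    eLpNorm (fun t => f (emb xh t)) ⊤ volume ^ (2:ℝ) ≤ 2 * Bfun f xh * Bfun (pd3 2 f) xh := by
  have h := agmon (slce f xh) (slce (pd3 2 f) xh) (fun t => hasDerivAt_slice xh f t)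
  rw [slce_coe, slce_coe] at h
  exact h

lemma Afun_ne_top (f : SchwartzMap (EuclideanSpace ℝ (Fin 3)) ℝ)
    (xh : EuclideanSpace ℝ (Fin 2)) :
    eLpNorm (fun t => f (emb xh t)) ⊤ volume ≠ ∞ := by
  obtain ⟨C, hC⟩ := schwartz_bdd (slce f xh)
  have h := eLpNormEssSup_le_of_ae_bound (μ := (volume : Measure ℝ))
    (Eventually.of_forall hC)
  rw [slce_coe] at h
  rw [eLpNorm_exponent_top]
  exact ne_top_of_le_ne_top ENNReal.ofReal_ne_top h

/-! ### Main theorem -/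

/-- Intermediate estimate (A.1): for `1/2 < s < 1`,
`‖‖f‖_{L^∞_{x₃}}‖_{L^{2/s}_{x_h}}^{2/s} ≲ ‖∂₃f‖_{L²}^{1/s} ‖‖f‖_{L²_{x₃}}‖_{L^{2/(2s-1)}_{x_h}}^{1/s}`. -/
theorem mixed_norm_intermediate_A1 :
    ∀ s : ℝ, 1/2 < s → s < 1 →
      ∃ C : ℝ, 0 < C ∧ ∀ f : SchwartzMap (EuclideanSpace ℝ (Fin 3)) ℝ,
        mixedNorm f ⊤ (ENNReal.ofReal (2/s)) ^ (2/s) ≤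
          C * L2 (pd3 2 f) ^ (1/s) *
            mixedNorm f 2 (ENNReal.ofReal (2/(2*s - 1))) ^ (1/s) := by
  intro s hs1 hs2
  have hs0 : (0:ℝ) < s := by linarith
  have h2s : (1:ℝ) < 2 * s := by linarith
  have h2s1 : (0:ℝ) < 2 * s - 1 := by linarith
  have hsne : s ≠ 0 := ne_of_gt hs0
  refine ⟨(2:ℝ) ^ (1/s), Real.rpow_pos_of_pos (by norm_num) _, fun f => ?_⟩
  set A : EuclideanSpace ℝ (Fin 2) → ℝ≥0∞ :=
    fun xh => eLpNorm (fun t => f (emb xh t)) ⊤ volume with hA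
  set B := Bfun f with hB
  set D := Bfun (pd3 2 f) with hD
  set Ee := eLpNorm ((pd3 2 f) : EuclideanSpace ℝ (Fin 3) → ℝ) 2 volume with hEe
  set qB : ℝ := 2/(2*s - 1) with hqB
  set ρ : ℝ≥0∞ := ENNReal.ofReal qB with hρ
  set M := eLpNorm (fun xh => (B xh).toReal) ρ volume with hM
  set I := ∫⁻ xh, A xh ^ ((2:ℝ)/s) with hI
  set J := ∫⁻ xh, B xh ^ qB with hJ
  have hqB1 : (1:ℝ) ≤ qB := by
    rw [hqB, le_div_iff₀ h2s1]; linarith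
  have hqB0 : (0:ℝ) < qB := by linarith
  have hstep : ∀ xh, A xh ^ ((2:ℝ)/s) ≤
      (2:ℝ≥0∞) ^ (1/s) * (D xh ^ (1/s) * B xh ^ (1/s)) := by
    intro xh
    have h1 := agmon_cor f xh
    have h2 := ENNReal.rpow_le_rpow h1 (le_of_lt (by positivity : (0:ℝ) < 1/s))
    calc A xh ^ ((2:ℝ)/s) = (A xh ^ (2:ℝ)) ^ (1/s:ℝ) := by
          rw [← ENNReal.rpow_mul]; congr 1; field_simp
      _ ≤ (2 * B xh * D xh) ^ (1/s:ℝ) := h2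
      _ = (2:ℝ≥0∞) ^ (1/s) * (D xh ^ (1/s) * B xh ^ (1/s)) := by
          rw [ENNReal.mul_rpow_of_nonneg _ _ (by positivity : (0:ℝ) ≤ 1/s),
            ENNReal.mul_rpow_of_nonneg _ _ (by positivity : (0:ℝ) ≤ 1/s)]
          ring
  have h2ne : ((2:ℝ≥0∞) ^ ((1:ℝ)/s)) ≠ ∞ :=
    ENNReal.rpow_ne_top_of_nonneg (by positivity) (by norm_num)
  have hconj : Real.HolderConjugate (2*s) (2*s/(2*s-1)) :=
    (Real.holderConjugate_iff_eq_conjExponent h2s).2 (by norm_num)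
  have hmD : AEMeasurable (fun xh => D xh ^ ((1:ℝ)/s)) volume :=
    (ENNReal.continuous_rpow_const.measurable.comp (measurable_Bfun (pd3 2 f))).aemeasurable
  have hmB : AEMeasurable (fun xh => B xh ^ ((1:ℝ)/s)) volume :=
    (ENNReal.continuous_rpow_const.measurable.comp (measurable_Bfun f)).aemeasurable
  have hHolder := ENNReal.lintegral_mul_le_Lp_mul_Lq volume hconj hmD hmB
  have hfac1 : (∫⁻ xh, (D xh ^ ((1:ℝ)/s)) ^ (2*s)) ^ (1/(2*s)) = Ee ^ ((1:ℝ)/s) := by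
    have h1 : ∀ xh : EuclideanSpace ℝ (Fin 2),
        (D xh ^ ((1:ℝ)/s)) ^ (2*s) = D xh ^ (2:ℝ) := by
      intro xh
      rw [← ENNReal.rpow_mul]
      congr 1
      field_simp
    simp_rw [h1]
    rw [hD, lintegral_Bfun_sq (pd3 2 f), ← hEe, ← ENNReal.rpow_mul]
    congr 1
    field_simp
  have hfac2 : (∫⁻ xh, (B xh ^ ((1:ℝ)/s)) ^ (2*s/(2*s-1))) ^ (1/(2*s/(2*s-1)))
      = J ^ ((2*s-1)/(2*s)) := by
    have h1 : ∀ xh : EuclideanSpace ℝ (Fin 2),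
        (B xh ^ ((1:ℝ)/s)) ^ (2*s/(2*s-1)) = B xh ^ qB := by
      intro xh
      rw [← ENNReal.rpow_mul]
      congr 1
      rw [hqB]
      field_simp
    simp_rw [h1, ← hJ]
    congr 1
    field_simp
  have hMJ : M = J ^ ((2*s-1)/2) := by
    have hρ0 : ρ ≠ 0 := by
      rw [hρ]
      simp only [ne_eq, ENNReal.ofReal_eq_zero, not_le]
      exact hqB0
    have hρt : ρ ≠ ∞ := ENNReal.ofReal_ne_top
    rw [hM, eLpNorm_eq_lintegral_rpow_enorm_toReal hρ0 hρt]
    have hρr : ρ.toReal = qB := by rw [hρ, ENNReal.toReal_ofReal hqB0.le]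
    rw [hρr]
    have h1 : ∀ xh : EuclideanSpace ℝ (Fin 2),
        (‖(B xh).toReal‖ₑ) ^ qB = B xh ^ qB := by
      intro xh
      congr 1
      rw [Real.enorm_eq_ofReal_abs, abs_of_nonneg ENNReal.toReal_nonneg,
        ENNReal.ofReal_toReal (Bfun_ne_top f xh)]
    simp_rw [h1, ← hJ]
    congr 1
    rw [hqB]
    field_simp
  have hkey : I ≤ (2:ℝ≥0∞) ^ ((1:ℝ)/s) * Ee ^ ((1:ℝ)/s) * M ^ ((1:ℝ)/s) := by
    calc I ≤ ∫⁻ xh, (2:ℝ≥0∞) ^ ((1:ℝ)/s) * (D xh ^ ((1:ℝ)/s) * B xh ^ ((1:ℝ)/s)) :=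
          lintegral_mono hstep
      _ = (2:ℝ≥0∞) ^ ((1:ℝ)/s) * ∫⁻ xh, D xh ^ ((1:ℝ)/s) * B xh ^ ((1:ℝ)/s) :=
          lintegral_const_mul' _ _ h2ne
      _ ≤ (2:ℝ≥0∞) ^ ((1:ℝ)/s) * (Ee ^ ((1:ℝ)/s) * J ^ ((2*s-1)/(2*s))) := by
          apply mul_le_mul_right
          calc ∫⁻ xh, D xh ^ ((1:ℝ)/s) * B xh ^ ((1:ℝ)/s)
              ≤ (∫⁻ xh, (D xh ^ ((1:ℝ)/s)) ^ (2*s)) ^ (1/(2*s)) *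
                (∫⁻ xh, (B xh ^ ((1:ℝ)/s)) ^ (2*s/(2*s-1))) ^ (1/(2*s/(2*s-1))) := by
                simpa using hHolder
            _ = Ee ^ ((1:ℝ)/s) * J ^ ((2*s-1)/(2*s)) := by rw [hfac1, hfac2]
      _ = (2:ℝ≥0∞) ^ ((1:ℝ)/s) * Ee ^ ((1:ℝ)/s) * M ^ ((1:ℝ)/s) := by
          rw [hMJ, ← ENNReal.rpow_mul, mul_assoc]
          congr 2
          field_simp
  have hEene : Ee ≠ ∞ := (schwartz_memL2' volume (pd3 2 f)).eLpNorm_lt_top.ne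
  have hJne : J ≠ ∞ := (lintegral_Bfun_rpow_lt_top f hqB1).ne
  have hMne : M ≠ ∞ := by
    rw [hMJ]; exact ENNReal.rpow_ne_top_of_nonneg (by positivity) hJne
  have hRHSne : (2:ℝ≥0∞) ^ ((1:ℝ)/s) * Ee ^ ((1:ℝ)/s) * M ^ ((1:ℝ)/s) ≠ ∞ :=
    ENNReal.mul_ne_top
      (ENNReal.mul_ne_top h2ne (ENNReal.rpow_ne_top_of_nonneg (by positivity) hEene))
      (ENNReal.rpow_ne_top_of_nonneg (by positivity) hMne)
  have hp0 : (ENNReal.ofReal (2/s)) ≠ 0 := by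
    simp only [ne_eq, ENNReal.ofReal_eq_zero, not_le]
    positivity
  have hLHS : mixedNorm f ⊤ (ENNReal.ofReal (2/s)) ^ ((2:ℝ)/s) = I.toReal := by
    rw [mixedNorm, eLpNorm_eq_lintegral_rpow_enorm_toReal hp0 ENNReal.ofReal_ne_top]
    rw [ENNReal.toReal_ofReal (by positivity : (0:ℝ) ≤ 2/s)]
    have h1 : ∀ xh : EuclideanSpace ℝ (Fin 2),
        (‖(eLpNorm (fun t => f (emb xh t)) ⊤ volume).toReal‖ₑ) ^ ((2:ℝ)/s)
          = A xh ^ ((2:ℝ)/s) := by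
      intro xh
      congr 1
      rw [Real.enorm_eq_ofReal_abs, abs_of_nonneg ENNReal.toReal_nonneg,
        ENNReal.ofReal_toReal (Afun_ne_top f xh)]
    simp_rw [h1, ← hI]
    rw [ENNReal.toReal_rpow, ← ENNReal.rpow_mul]
    congr 1
    rw [one_div]
    field_simp
    simp
  have hRHS : (2:ℝ) ^ ((1:ℝ)/s) * L2 (pd3 2 f) ^ ((1:ℝ)/s) *
      mixedNorm f 2 ρ ^ ((1:ℝ)/s)
      = ((2:ℝ≥0∞) ^ ((1:ℝ)/s) * Ee ^ ((1:ℝ)/s) * M ^ ((1:ℝ)/s)).toReal := by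
    rw [ENNReal.toReal_mul, ENNReal.toReal_mul]
    rw [← ENNReal.toReal_rpow, ← ENNReal.toReal_rpow, ← ENNReal.toReal_rpow]
    congr 2
  have hfinal := ENNReal.toReal_mono hRHSne hkey
  rw [hLHS, hRHS]
  exact hfinal

end
end

section
/- Let 0 < σ < s, κ > 0 and M ≥ 0. Let E : [0,∞) → ℝ be differentiable and D : [0,∞) → ℝ continuous with D(t) ≥ 0, E′(t) + κ·D(t) ≤ 0, and (1+t)^s·E(t) ≤ M for all t ≥ 0. Then for every t ≥ 0, (1+t)^σ·E(t) + κ·∫₀ᵗ (1+τ)^σ D(τ) dτ ≤ E(0) + σ·M/(s−σ). (Time-weighted dissipation estimate, the abstract content of the last lemma of Section 3.5.) -/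
open Set MeasureTheory intervalIntegral

/-- Time-weighted dissipation estimate: if `E' + κ D ≤ 0` on `[0,∞)`, `D ≥ 0` is continuous,
and `(1+t)^s E(t) ≤ M`, then for `0 < σ < s`,
`(1+t)^σ E(t) + κ ∫₀ᵗ (1+τ)^σ D(τ) dτ ≤ E(0) + σ M/(s-σ)`. -/
theorem time_weighted_dissipation (σ s κ M : ℝ)
    (hσ : 0 < σ) (hσs : σ < s) (hκ : 0 < κ) (hM : 0 ≤ M)
    (E E' D : ℝ → ℝ)
    (hD : ∀ t, 0 ≤ t → 0 ≤ D t) (hDcont : ContinuousOn D (Set.Ici 0))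
    (hderiv : ∀ t, 0 ≤ t → HasDerivWithinAt E (E' t) (Set.Ici 0) t)
    (hineq : ∀ t, 0 ≤ t → E' t + κ * D t ≤ 0)
    (hdecay : ∀ t, 0 ≤ t → (1 + t) ^ s * E t ≤ M) :
    ∀ t, 0 ≤ t →
      (1 + t) ^ σ * E t + κ * (∫ τ in (0:ℝ)..t, (1 + τ) ^ σ * D τ) ≤
        E 0 + σ * M / (s - σ) := by
  intro t ht
  have h1 : ∀ τ : ℝ, 0 ≤ τ → (0:ℝ) < 1 + τ := fun τ hτ => by linarith
  set f : ℝ → ℝ := fun τ => (1 + τ) ^ σ * D τ with hfdef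
  set g : ℝ → ℝ := fun τ => (1 + τ) ^ (σ - 1) * E τ with hgdef
  have hEcont : ContinuousOn E (Ici 0) := fun x hx => (hderiv x hx).continuousWithinAt
  have hpow : ∀ p : ℝ, ContinuousOn (fun τ : ℝ => (1 + τ) ^ p) (Ici 0) := by
    intro p
    apply ContinuousOn.rpow_const (continuous_const.add continuous_id).continuousOn
    intro x hx; exact Or.inl (ne_of_gt (h1 x hx))
  have hfc : ContinuousOn f (Ici 0) := (hpow σ).mul hDcont
  have hgc : ContinuousOn g (Ici 0) := (hpow (σ - 1)).mul hEcont
  have hsub : ∀ x : ℝ, 0 ≤ x → uIcc (0:ℝ) x ⊆ Ici 0 := by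
    intro x hx; rw [uIcc_of_le hx]; exact Icc_subset_Ici_self
  have hfint : ∀ x : ℝ, 0 ≤ x → IntervalIntegrable f volume 0 x :=
    fun x hx => (hfc.mono (hsub x hx)).intervalIntegrable
  have hgint : ∀ x : ℝ, 0 ≤ x → IntervalIntegrable g volume 0 x :=
    fun x hx => (hgc.mono (hsub x hx)).intervalIntegrable
  set F : ℝ → ℝ := fun x =>
    (1 + x) ^ σ * E x + κ * (∫ τ in (0:ℝ)..x, f τ) - σ * ∫ τ in (0:ℝ)..x, g τ with hFdef
  -- derivative of F at interior points
  have hFderiv : ∀ x ∈ Ioo (0:ℝ) t, HasDerivAt F ((1 + x) ^ σ * (E' x + κ * D x)) x := by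
    intro x hx
    have hx0 : 0 < x := hx.1
    have hmem : Ici (0:ℝ) ∈ nhds x := Ici_mem_nhds hx0
    have hE : HasDerivAt E (E' x) x := (hderiv x hx0.le).hasDerivAt hmem
    have hpowd : HasDerivAt (fun y : ℝ => (1 + y) ^ σ) (σ * (1 + x) ^ (σ - 1)) x := by
      have h0 := Real.hasDerivAt_rpow_const (x := 1 + x) (p := σ)
        (Or.inl (ne_of_gt (h1 x hx0.le)))
      have h' := h0.comp x ((hasDerivAt_id x).const_add 1)
      simpa [Function.comp_def] using h'
    have hG : HasDerivAt (fun y => (1 + y) ^ σ * E y)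
        (σ * (1 + x) ^ (σ - 1) * E x + (1 + x) ^ σ * E' x) x := hpowd.mul hE
    have hmeasf : StronglyMeasurableAtFilter f (nhds x) :=
      ⟨Ici 0, hmem, hfc.aestronglyMeasurable measurableSet_Ici⟩
    have hmeasg : StronglyMeasurableAtFilter g (nhds x) :=
      ⟨Ici 0, hmem, hgc.aestronglyMeasurable measurableSet_Ici⟩
    have hIf : HasDerivAt (fun y => ∫ τ in (0:ℝ)..y, f τ) (f x) x :=
      integral_hasDerivAt_right (hfint x hx0.le) hmeasf (hfc.continuousAt hmem)
    have hIg : HasDerivAt (fun y => ∫ τ in (0:ℝ)..y, g τ) (g x) x :=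
      integral_hasDerivAt_right (hgint x hx0.le) hmeasg (hgc.continuousAt hmem)
    have htot := (hG.add (hIf.const_mul κ)).sub (hIg.const_mul σ)
    refine htot.congr_deriv ?_
    simp only [hfdef, hgdef]
    ring
  -- continuity of F on [0,t]
  have hIccsub : Icc (0:ℝ) t ⊆ Ici 0 := Icc_subset_Ici_self
  have hFcont : ContinuousOn F (Icc 0 t) := by
    have h1c : ContinuousOn (fun x => (1 + x) ^ σ * E x) (Icc 0 t) :=
      ((hpow σ).mul hEcont).mono hIccsub
    have h2c : ContinuousOn (fun x => ∫ τ in (0:ℝ)..x, f τ) (Icc 0 t) := by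
      have := continuousOn_primitive_interval
        (f := f) (μ := volume) (a := 0) (b := t)
        ((hfc.mono (hsub t ht)).integrableOn_compact isCompact_uIcc)
      rwa [uIcc_of_le ht] at this
    have h3c : ContinuousOn (fun x => ∫ τ in (0:ℝ)..x, g τ) (Icc 0 t) := by
      have := continuousOn_primitive_interval
        (f := g) (μ := volume) (a := 0) (b := t)
        ((hgc.mono (hsub t ht)).integrableOn_compact isCompact_uIcc)
      rwa [uIcc_of_le ht] at this
    exact (h1c.add (h2c.const_smul κ)).sub (h3c.const_smul σ)
  -- F is antitone on [0,t]
  have hanti : AntitoneOn F (Icc 0 t) := by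
    apply antitoneOn_of_deriv_nonpos (convex_Icc 0 t) hFcont
    · intro x hx
      rw [interior_Icc] at hx
      exact (hFderiv x hx).differentiableAt.differentiableWithinAt
    · intro x hx
      rw [interior_Icc] at hx
      rw [(hFderiv x hx).deriv]
      have hpos : (0:ℝ) < (1 + x) ^ σ := Real.rpow_pos_of_pos (h1 x hx.1.le) σ
      have := hineq x hx.1.le
      exact mul_nonpos_of_nonneg_of_nonpos hpos.le this
  have hFt : F t ≤ F 0 :=
    hanti (left_mem_Icc.2 ht) (right_mem_Icc.2 ht) ht
  have hF0 : F 0 = E 0 := by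
    simp [hFdef, Real.one_rpow]
  -- bound the g-integral
  have hgle : ∀ τ ∈ Icc (0:ℝ) t, g τ ≤ M * (1 + τ) ^ (σ - 1 - s) := by
    intro τ hτ
    have hτ0 : 0 ≤ τ := hτ.1
    have hb : (0:ℝ) < 1 + τ := h1 τ hτ0
    have hbs : (0:ℝ) < (1 + τ) ^ s := Real.rpow_pos_of_pos hb s
    have hE : E τ ≤ M * (1 + τ) ^ (-s) := by
      have h := hdecay τ hτ0
      rw [Real.rpow_neg hb.le, ← div_eq_mul_inv]
      exact (le_div_iff₀ hbs).2 (by rw [mul_comm]; exact h)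
    have hnn : (0:ℝ) ≤ (1 + τ) ^ (σ - 1) := (Real.rpow_pos_of_pos hb _).le
    calc g τ ≤ (1 + τ) ^ (σ - 1) * (M * (1 + τ) ^ (-s)) :=
          mul_le_mul_of_nonneg_left hE hnn
      _ = M * (1 + τ) ^ (σ - 1 - s) := by
          rw [← mul_assoc, mul_comm ((1 + τ) ^ (σ - 1)) M, mul_assoc,
            ← Real.rpow_add hb]
          ring_nf
  have hmajint : IntervalIntegrable (fun τ => M * (1 + τ) ^ (σ - 1 - s)) volume 0 t :=
    ((continuousOn_const.mul (hpow (σ - 1 - s))).mono (hsub t ht)).intervalIntegrable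
  have hIgle : (∫ τ in (0:ℝ)..t, g τ) ≤ ∫ τ in (0:ℝ)..t, M * (1 + τ) ^ (σ - 1 - s) :=
    intervalIntegral.integral_mono_on ht (hgint t ht) hmajint hgle
  -- compute the majorant integral
  have hJ : (∫ τ in (0:ℝ)..t, (1 + τ) ^ (σ - 1 - s))
      = ((1 + t) ^ (σ - s) - 1) / (σ - s) := by
    have h0 : (∫ τ in (0:ℝ)..t, (1 + τ) ^ (σ - 1 - s))
        = ∫ x in (1:ℝ)..(1 + t), x ^ (σ - 1 - s) := by
      have := intervalIntegral.integral_comp_add_left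
        (a := (0:ℝ)) (b := t) (fun x : ℝ => x ^ (σ - 1 - s)) 1
      simpa using this
    rw [h0, integral_rpow]
    · norm_num
      rw [show σ - 1 - s + 1 = σ - s by ring]
    · right
      constructor
      · intro h; apply absurd hσs; rw [show s = σ - 1 - (-1) by linarith]; linarith
      · rw [uIcc_of_le (by linarith : (1:ℝ) ≤ 1 + t)]
        intro h; exact absurd h.1 (by norm_num)
  have hJle : ((1 + t) ^ (σ - s) - 1) / (σ - s) ≤ 1 / (s - σ) := by
    have heq : ((1 + t) ^ (σ - s) - 1) / (σ - s) = (1 - (1 + t) ^ (σ - s)) / (s - σ) := by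
      have hne : σ - s ≠ 0 := sub_ne_zero.2 (ne_of_lt hσs)
      have hne' : s - σ ≠ 0 := sub_ne_zero.2 (ne_of_gt hσs)
      field_simp
      ring
    rw [heq]
    have hnn : (0:ℝ) ≤ (1 + t) ^ (σ - s) := (Real.rpow_pos_of_pos (h1 t ht) _).le
    gcongr
    · linarith
  -- combine
  have hIg_final : σ * (∫ τ in (0:ℝ)..t, g τ) ≤ σ * M / (s - σ) := by
    have h1' : (∫ τ in (0:ℝ)..t, M * (1 + τ) ^ (σ - 1 - s))
        = M * (((1 + t) ^ (σ - s) - 1) / (σ - s)) := by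
      rw [intervalIntegral.integral_const_mul, hJ]
    have h2' : (∫ τ in (0:ℝ)..t, M * (1 + τ) ^ (σ - 1 - s)) ≤ M * (1 / (s - σ)) := by
      rw [h1']; exact mul_le_mul_of_nonneg_left hJle hM
    have := hIgle.trans h2'
    calc σ * (∫ τ in (0:ℝ)..t, g τ) ≤ σ * (M * (1 / (s - σ))) :=
          mul_le_mul_of_nonneg_left this hσ.le
      _ = σ * M / (s - σ) := by ring
  have hkey : (1 + t) ^ σ * E t + κ * (∫ τ in (0:ℝ)..t, f τ)
      ≤ E 0 + σ * ∫ τ in (0:ℝ)..t, g τ := by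
    have := hFt.trans_eq hF0
    simp only [hFdef] at this
    linarith
  calc (1 + t) ^ σ * E t + κ * (∫ τ in (0:ℝ)..t, (1 + τ) ^ σ * D τ)
      ≤ E 0 + σ * ∫ τ in (0:ℝ)..t, g τ := hkey
    _ ≤ E 0 + σ * M / (s - σ) := by linarith
end

section
/- For every integer m ≥ 0 there exists a constant C > 0 such that for every Schwartz function f : ℝ³ → ℝ, Σ_{α∈ℕ³, |α|≤m} ‖∂^α f‖_{L²}² ≤ C·( Σ_{α∈ℕ³, α₃=0, |α|≤m} ‖∂^α f‖_{L²}² + ‖∂₃^m f‖_{L²}² ). (The full H^m norm is controlled by the tangential norm H^m_tan together with the pure vertical derivative ∂₃^m; this is the norm equivalence asserted at the start of Section 3.1.) -/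
open MeasureTheory SchwartzMap

noncomputable section

/-- Iterated partial derivative `∂₁^a ∂₂^b ∂₃^c f`. -/
def dmix (a b c : ℕ) (f : SchwartzMap (EuclideanSpace ℝ (Fin 3)) ℝ) :
    SchwartzMap (EuclideanSpace ℝ (Fin 3)) ℝ :=
  (pd3 0)^[a] ((pd3 1)^[b] ((pd3 2)^[c] f))

/-- Multi-indices `α = (α₁, α₂, α₃) ∈ ℕ³` with `|α| ≤ m`. -/
def multiIdx3 (m : ℕ) : Finset (ℕ × ℕ × ℕ) :=
  ((Finset.range (m+1)) ×ˢ (Finset.range (m+1)) ×ˢ (Finset.range (m+1))).filter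
    (fun a => a.1 + a.2.1 + a.2.2 ≤ m)

/-- Tangential multi-indices `α = (α₁, α₂)` (i.e. `α₃ = 0`) with `|α| ≤ m`. -/
def multiIdx2 (m : ℕ) : Finset (ℕ × ℕ) :=
  ((Finset.range (m+1)) ×ˢ (Finset.range (m+1))).filter (fun a => a.1 + a.2 ≤ m)

abbrev E3 := EuclideanSpace ℝ (Fin 3)
abbrev S3 := SchwartzMap E3 ℝ

lemma pd3_apply (i : Fin 3) (f : S3) (x : E3) :
    pd3 i f x = fderiv ℝ (⇑f) x (EuclideanSpace.single i 1) := rfl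

lemma fderiv_smooth (f : S3) : Differentiable ℝ (fderiv ℝ (⇑f)) :=
  ((f.smooth ⊤).fderiv_right (m := 1) (by norm_cast)).differentiable (by norm_cast)

lemma pd3_comm (i j : Fin 3) (f : S3) : pd3 i (pd3 j f) = pd3 j (pd3 i f) := by
  ext x
  have hd : DifferentiableAt ℝ (fderiv ℝ (⇑f)) x := (fderiv_smooth f).differentiableAt
  have key : ∀ v w : E3,
      fderiv ℝ (fun y => fderiv ℝ (⇑f) y w) x v = fderiv ℝ (fderiv ℝ (⇑f)) x v w := by
    intro v w
    rw [fderiv_clm_apply hd (differentiableAt_const w)]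
    simp
  have hsym := ((f.smooth 2).contDiffAt (x := x)).isSymmSndFDerivAt (by simp)
  rw [pd3_apply, pd3_apply]
  have hj : ⇑(pd3 j f) = fun y => fderiv ℝ (⇑f) y (EuclideanSpace.single j 1) := funext (pd3_apply j f)
  have hi : ⇑(pd3 i f) = fun y => fderiv ℝ (⇑f) y (EuclideanSpace.single i 1) := funext (pd3_apply i f)
  rw [hi, hj, key, key]
  exact hsym _ _


lemma integrable_mul (f g : S3) : Integrable (fun x => f x * g x) volume :=
  g.integrable.bdd_mul f.continuous.aestronglyMeasurable (Filter.Eventually.of_forall fun x => norm_le_seminorm ℝ f x)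

lemma memL2 (f : S3) : MemLp (⇑f) 2 volume :=
  (memLp_two_iff_integrable_sq f.continuous.aestronglyMeasurable).2
    (by simpa [pow_two] using integrable_mul f f)

def toL2 (f : S3) : Lp ℝ 2 (volume : Measure E3) := (memL2 f).toLp f

def ip (f g : S3) : ℝ := ∫ x, f x * g x

lemma ip_eq_inner (f g : S3) : ip f g = inner ℝ (toL2 f) (toL2 g) := by
  rw [MeasureTheory.L2.inner_def]
  refine (integral_congr_ae ?_).symm
  filter_upwards [(memL2 f).coeFn_toLp, (memL2 g).coeFn_toLp] with x hx hy
  simp only [toL2, hx, hy, RCLike.inner_apply, starRingEnd_apply, star_trivial, mul_comm]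

lemma L2_eq_norm (f : S3) : L2 f = ‖toL2 f‖ := (Lp.norm_toLp _ _).symm

lemma L2_nonneg (f : S3) : 0 ≤ L2 f := ENNReal.toReal_nonneg

lemma ip_self (f : S3) : ip f f = L2 f ^ 2 := by
  rw [ip_eq_inner, L2_eq_norm, real_inner_self_eq_norm_sq]

lemma ip_cauchy (f g : S3) : |ip f g| ≤ L2 f * L2 g := by
  rw [ip_eq_inner, L2_eq_norm, L2_eq_norm]; exact abs_real_inner_le_norm _ _

lemma ibp (i : Fin 3) (f g : S3) : ip (pd3 i f) g = - ip f (pd3 i g) := by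
  have h := integral_mul_fderiv_eq_neg_fderiv_mul_of_integrable (μ := (volume : Measure E3))
    (f := ⇑f) (g := ⇑g) (v := EuclideanSpace.single i 1)
    (by simpa only [pd3_apply] using integrable_mul (pd3 i f) g)
    (by simpa only [pd3_apply] using integrable_mul f (pd3 i g)) (integrable_mul f g)
    (fun x _ => f.differentiable x) (fun x _ => g.differentiable x)
  simp only [ip]
  have h1 : (fun x => f x * fderiv ℝ (⇑g) x (EuclideanSpace.single i 1))
      = fun x => f x * (pd3 i g) x := funext fun x => by rw [pd3_apply]
  have h2 : (fun x => fderiv ℝ (⇑f) x (EuclideanSpace.single i 1) * g x)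
      = fun x => (pd3 i f) x * g x := funext fun x => by rw [pd3_apply]
  rw [h1, h2] at h
  linarith [h]

lemma ip_swap (i j : Fin 3) (g h : S3) : ip (pd3 i g) (pd3 j h) = ip (pd3 j g) (pd3 i h) := by
  rw [ibp i g (pd3 j h), pd3_comm i j h, ibp j g (pd3 i h)]


lemma comm_iter (i j : Fin 3) (n : ℕ) (g : S3) :
    pd3 i ((pd3 j)^[n] g) = (pd3 j)^[n] (pd3 i g) := by
  induction n generalizing g with
  | zero => rfl
  | succ n ih =>
    rw [Function.iterate_succ_apply, Function.iterate_succ_apply, ih, pd3_comm]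

lemma dmix_a (a b c : ℕ) (f : S3) : dmix (a+1) b c f = pd3 0 (dmix a b c f) := by
  simp [dmix, Function.iterate_succ_apply']

lemma dmix_b (a b c : ℕ) (f : S3) : dmix a (b+1) c f = pd3 1 (dmix a b c f) := by
  simp only [dmix, comm_iter, Function.iterate_succ_apply']

lemma dmix_c (a b c : ℕ) (f : S3) : dmix a b (c+1) f = pd3 2 (dmix a b c f) := by
  simp only [dmix, Function.iterate_succ_apply']
  rw [comm_iter 2 0, comm_iter 2 1]

lemma lemA (i j : Fin 3) (u : S3) :
    L2 (pd3 i (pd3 j u)) ^ 2 ≤ L2 (pd3 i (pd3 i u)) * L2 (pd3 j (pd3 j u)) := by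
  have h : L2 (pd3 i (pd3 j u)) ^ 2 = ip (pd3 i (pd3 j u)) (pd3 j (pd3 i u)) := by
    rw [← ip_self]; congr 1; exact pd3_comm i j u
  rw [h, ip_swap i j (pd3 j u) (pd3 i u)]
  calc ip (pd3 j (pd3 j u)) (pd3 i (pd3 i u)) ≤ |ip (pd3 j (pd3 j u)) (pd3 i (pd3 i u))| :=
        le_abs_self _
    _ ≤ L2 (pd3 j (pd3 j u)) * L2 (pd3 i (pd3 i u)) := ip_cauchy _ _
    _ = _ := mul_comm _ _

lemma lemB (i : Fin 3) (g : S3) : L2 (pd3 i g) ^ 2 ≤ L2 g * L2 (pd3 i (pd3 i g)) := by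
  rw [← ip_self, ibp i g (pd3 i g)]
  calc - ip g (pd3 i (pd3 i g)) ≤ |ip g (pd3 i (pd3 i g))| := neg_le_abs _
    _ ≤ _ := ip_cauchy _ _

lemma two_mul_le {x y z : ℝ} (hx : 0 ≤ x) (hy : 0 ≤ y) (hz : 0 ≤ z) (h : x^2 ≤ y*z) :
    2*x ≤ y + z := by nlinarith [sq_nonneg (y - z)]

lemma conv_max (n : ℕ) (x : ℕ → ℝ) (hc : ∀ t, t + 2 ≤ n → 2 * x (t+1) ≤ x t + x (t+2)) :
    ∀ t ≤ n, x t ≤ max (x 0) (x n) := by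
  induction n with
  | zero => intro t ht; simp [Nat.le_zero.mp ht]
  | succ k IH =>
    have IH' := IH (fun t ht => hc t (by omega))
    have key : x k ≤ max (x 0) (x (k+1)) := by
      match k with
      | 0 => exact le_max_left _ _
      | (j+1) =>
        have h1 := hc j (by omega)
        have h2 := IH' j (by omega)
        rcases le_max_iff.mp h2 with h | h
        · rcases le_total (x 0) (x (j+2)) with h' | h'
          · have : x (j+1) ≤ x (j+2) := by linarith
            exact le_max_of_le_right this
          · have : x (j+1) ≤ x 0 := by linarith
            exact le_max_of_le_left this
        · have : x (j+1) ≤ x (j+2) := by linarith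
          exact le_max_of_le_right this
    intro t ht
    rcases Nat.lt_or_ge t (k+1) with h | h
    · have h1 := IH' t (by omega)
      rcases le_max_iff.mp h1 with h' | h'
      · exact le_max_of_le_left h'
      · exact h'.trans key
    · have : t = k+1 := by omega
      subst this; exact le_max_right _ _

lemma step1 (f : S3) (b s : ℕ) : ∀ t ≤ s,
    L2 (dmix (s-t) b t f) ≤ max (L2 (dmix s b 0 f)) (L2 (dmix 0 b s f)) := by
  have hconv : ∀ t, t + 2 ≤ s → 2 * L2 (dmix (s-(t+1)) b (t+1) f) ≤
      L2 (dmix (s-t) b t f) + L2 (dmix (s-(t+2)) b (t+2) f) := by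
    intro t ht
    set u := dmix (s-(t+2)) b t f with hu
    have e0 : dmix (s-t) b t f = pd3 0 (pd3 0 u) := by
      rw [show s - t = (s - (t+2)) + 1 + 1 by omega, dmix_a, dmix_a]
    have e1 : dmix (s-(t+1)) b (t+1) f = pd3 0 (pd3 2 u) := by
      rw [show s - (t+1) = (s-(t+2)) + 1 by omega, dmix_a, dmix_c]
    have e2 : dmix (s-(t+2)) b (t+2) f = pd3 2 (pd3 2 u) := by rw [dmix_c, dmix_c]
    rw [e0, e1, e2]
    exact two_mul_le (L2_nonneg _) (L2_nonneg _) (L2_nonneg _) (lemA 0 2 u)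
  intro t ht
  have H := conv_max s (fun r => L2 (dmix (s-r) b r f)) hconv t ht
  simpa using H

lemma step2 (f : S3) (s : ℕ) : ∀ t ≤ s,
    L2 (dmix 0 (s-t) t f) ≤ max (L2 (dmix 0 s 0 f)) (L2 (dmix 0 0 s f)) := by
  have hconv : ∀ t, t + 2 ≤ s → 2 * L2 (dmix 0 (s-(t+1)) (t+1) f) ≤
      L2 (dmix 0 (s-t) t f) + L2 (dmix 0 (s-(t+2)) (t+2) f) := by
    intro t ht
    set u := dmix 0 (s-(t+2)) t f with hu
    have e0 : dmix 0 (s-t) t f = pd3 1 (pd3 1 u) := by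
      rw [show s - t = (s - (t+2)) + 1 + 1 by omega, dmix_b, dmix_b]
    have e1 : dmix 0 (s-(t+1)) (t+1) f = pd3 1 (pd3 2 u) := by
      rw [show s - (t+1) = (s-(t+2)) + 1 by omega, dmix_b, dmix_c]
    have e2 : dmix 0 (s-(t+2)) (t+2) f = pd3 2 (pd3 2 u) := by rw [dmix_c, dmix_c]
    rw [e0, e1, e2]
    exact two_mul_le (L2_nonneg _) (L2_nonneg _) (L2_nonneg _) (lemA 1 2 u)
  intro t ht
  have H := conv_max s (fun r => L2 (dmix 0 (s-r) r f)) hconv t ht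
  simpa using H

lemma step3 (f : S3) (n : ℕ) : ∀ t ≤ n,
    L2 (dmix 0 0 t f) ≤ max (L2 (dmix 0 0 0 f)) (L2 (dmix 0 0 n f)) := by
  have hconv : ∀ t, t + 2 ≤ n → 2 * L2 (dmix 0 0 (t+1) f) ≤
      L2 (dmix 0 0 t f) + L2 (dmix 0 0 (t+2) f) := by
    intro t ht
    set g := dmix 0 0 t f with hg
    have e1 : dmix 0 0 (t+1) f = pd3 2 g := dmix_c 0 0 t f
    have e2 : dmix 0 0 (t+2) f = pd3 2 (pd3 2 g) := by rw [dmix_c, dmix_c]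
    rw [e1, e2]
    exact two_mul_le (L2_nonneg _) (L2_nonneg _) (L2_nonneg _) (lemB 2 g)
  exact conv_max n (fun r => L2 (dmix 0 0 r f)) hconv



/-- The full `H^m` norm is controlled by the tangential `H^m_tan` norm together with the pure
vertical derivative `∂₃^m`:
`Σ_{|α|≤m} ‖∂^α f‖² ≲ Σ_{α₃=0, |α|≤m} ‖∂^α f‖² + ‖∂₃^m f‖²`. -/
theorem Hm_norm_equivalence (m : ℕ) :
    ∃ C : ℝ, 0 < C ∧ ∀ f : SchwartzMap (EuclideanSpace ℝ (Fin 3)) ℝ,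
      ∑ a ∈ multiIdx3 m, L2 (dmix a.1 a.2.1 a.2.2 f) ^ 2 ≤
        C * ((∑ a ∈ multiIdx2 m, L2 (dmix a.1 a.2 0 f) ^ 2) + L2 ((pd3 2)^[m] f) ^ 2) := by
  have hcard : 0 < (multiIdx3 m).card := by
    apply Finset.card_pos.mpr
    exact ⟨(0,0,0), by simp [multiIdx3]⟩
  refine ⟨((multiIdx3 m).card : ℝ), by exact_mod_cast hcard, fun f => ?_⟩
  have hT0 : 0 ≤ ∑ a ∈ multiIdx2 m, L2 (dmix a.1 a.2 0 f) ^ 2 :=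
    Finset.sum_nonneg fun _ _ => sq_nonneg _
  have hV0 : (0:ℝ) ≤ L2 ((pd3 2)^[m] f) ^ 2 := sq_nonneg _
  have tangent : ∀ p q : ℕ, p + q ≤ m →
      L2 (dmix p q 0 f) ^ 2 ≤ ∑ a ∈ multiIdx2 m, L2 (dmix a.1 a.2 0 f) ^ 2 := by
    intro p q hpq
    refine Finset.single_le_sum (f := fun r : ℕ × ℕ => L2 (dmix r.1 r.2 0 f) ^ 2)
      (fun i _ => sq_nonneg _) (a := (p, q)) ?_
    simp only [multiIdx2, Finset.mem_filter, Finset.mem_product, Finset.mem_range]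
    omega
  have key : ∀ a ∈ multiIdx3 m, L2 (dmix a.1 a.2.1 a.2.2 f) ^ 2 ≤
      (∑ a ∈ multiIdx2 m, L2 (dmix a.1 a.2 0 f) ^ 2) + L2 ((pd3 2)^[m] f) ^ 2 := by
    rintro ⟨a, b, c⟩ hmem
    have habc : a + b + c ≤ m := by
      simp only [multiIdx3, Finset.mem_filter] at hmem
      exact hmem.2
    have hb0 : 0 ≤ L2 (dmix a b c f) := L2_nonneg _
    have h1 := step1 f b (a+c) c (by omega)
    rw [show a + c - c = a by omega] at h1
    have h2 := step2 f (b+(a+c)) (a+c) (by omega)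
    rw [show b + (a+c) - (a+c) = b by omega] at h2
    have h3 := step3 f m (b+(a+c)) (by omega)
    have hVm : L2 (dmix 0 0 m f) ^ 2 = L2 ((pd3 2)^[m] f) ^ 2 := rfl
    have bound : ∀ y : S3, L2 (dmix a b c f) ≤ L2 y →
        L2 y ^ 2 ≤ (∑ a ∈ multiIdx2 m, L2 (dmix a.1 a.2 0 f) ^ 2) + L2 ((pd3 2)^[m] f) ^ 2 →
        L2 (dmix a b c f) ^ 2 ≤
          (∑ a ∈ multiIdx2 m, L2 (dmix a.1 a.2 0 f) ^ 2) + L2 ((pd3 2)^[m] f) ^ 2 :=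
      fun y hy hy2 => (pow_le_pow_left₀ hb0 hy 2).trans hy2
    rcases le_max_iff.mp h1 with h | h
    · exact bound _ h ((tangent (a+c) b (by omega)).trans (le_add_of_nonneg_right hV0))
    · rcases le_max_iff.mp (h.trans h2) with h' | h'
      · exact bound _ h' ((tangent 0 (b+(a+c)) (by omega)).trans (le_add_of_nonneg_right hV0))
      · rcases le_max_iff.mp (h'.trans h3) with h'' | h''
        · exact bound _ h'' ((tangent 0 0 (by omega)).trans (le_add_of_nonneg_right hV0))
        · exact bound _ h'' (by rw [hVm] at *; exact le_add_of_nonneg_left hT0)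
  calc ∑ a ∈ multiIdx3 m, L2 (dmix a.1 a.2.1 a.2.2 f) ^ 2
      ≤ (multiIdx3 m).card •
        ((∑ a ∈ multiIdx2 m, L2 (dmix a.1 a.2 0 f) ^ 2) + L2 ((pd3 2)^[m] f) ^ 2) :=
        Finset.sum_le_card_nsmul _ _ _ key
    _ = ((multiIdx3 m).card : ℝ) *
        ((∑ a ∈ multiIdx2 m, L2 (dmix a.1 a.2 0 f) ^ 2) + L2 ((pd3 2)^[m] f) ^ 2) :=
        nsmul_eq_mul _ _
end
end
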